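/- Let O₀ be a discrete valuation ring of characteristic 0 with uniformizer π₀ such that π₀ divides 2 in O₀, and let t ∈ O₀ satisfy either (π₀ ∣ t and t ∣ 2) or t = 0. Let R be a commutative O₀-algebra, let d ≥ 1 be an odd integer, and let W, B be d×d matrices over R such that: W = Wᵗ; B + Bᵗ = t·W; and there exist a₁, …, a_d ∈ R with W_{ii} = 2·a_i and B_{ii} = t·a_i for all 1 ≤ i ≤ d. Then the determinant of the 2d×2d block matrix [[W, B], [Bᵗ, π₀·W]] lies in the ideal of R generated by 4·π₀ − t². -/

import Mathlib

open Matrix MvPolynomial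



/-- Odd-size skew-symmetric matrices over a char-zero domain have zero determinant. -/
lemma aux_skew_det {S : Type*} [CommRing S] [IsDomain S] [CharZero S] {d : ℕ} (hd : Odd d)
    (A : Matrix (Fin d) (Fin d) S) (hA : Aᵀ = -A) : A.det = 0 := by
  have h1 : A.det = -A.det := by
    conv_lhs => rw [← Matrix.det_transpose, hA, Matrix.det_neg]
    simp [hd.neg_one_pow]
  have h2 : (2 : S) * A.det = 0 := by linear_combination h1
  exact (mul_eq_zero.mp h2).resolve_left two_ne_zero

/-- `4·X p − (X τ)²` divides `2 f` implies it divides `f` in `ℤ[...]`. -/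
lemma aux_two_dvd {V : Type*} (p τ : V) (f : MvPolynomial V ℤ)
    (h : (4 * X p - X τ ^ 2) ∣ 2 * f) : (4 * X p - X τ ^ 2) ∣ f := by
  obtain ⟨g, hg⟩ := h
  set θ : MvPolynomial V ℤ →+* MvPolynomial V (ZMod 2) :=
    (MvPolynomial.map (Int.castRingHom (ZMod 2))) with hθdef
  have hθ : θ (2 * f) = θ (4 * X p - X τ ^ 2) * θ g := by rw [hg, _root_.map_mul]
  have h2 : (2 : MvPolynomial V (ZMod 2)) = 0 := by
    have : (2 : MvPolynomial V (ZMod 2)) = C (2 : ZMod 2) := (map_ofNat (C : ZMod 2 →+* MvPolynomial V (ZMod 2)) 2).symm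
    rw [this, show (2 : ZMod 2) = 0 by decide, map_zero]
  have h4 : (4 : MvPolynomial V (ZMod 2)) = 0 := by
    have : (4 : MvPolynomial V (ZMod 2)) = 2 * 2 := by norm_num
    rw [this, h2]; ring
  have hc : θ (4 * X p - X τ ^ 2) = -(X τ ^ 2) := by
    rw [map_sub, _root_.map_mul, map_pow, map_ofNat]
    simp only [hθdef, MvPolynomial.map_X]
    rw [h4]; ring
  have hL : θ (2 * f) = 0 := by
    rw [_root_.map_mul, map_ofNat, h2, zero_mul]
  have hθg : (X τ : MvPolynomial V (ZMod 2)) ^ 2 * θ g = 0 := by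
    rw [hL, hc] at hθ
    linear_combination hθ
  have hg0 : θ g = 0 := by
    rcases mul_eq_zero.mp hθg with h | h
    · exact absurd (pow_eq_zero_iff (n := 2) (by norm_num) |>.mp h) (MvPolynomial.X_ne_zero τ)
    · exact h
  have h2g : (C (2:ℤ) : MvPolynomial V ℤ) ∣ g := by
    rw [MvPolynomial.C_dvd_iff_dvd_coeff]
    intro m
    have := congrArg (MvPolynomial.coeff m) hg0
    rw [hθdef, MvPolynomial.coeff_map] at this
    simpa using (ZMod.intCast_zmod_eq_zero_iff_dvd _ 2).mp (by simpa using this)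
  obtain ⟨g', hg'⟩ := h2g
  have hC2 : (C (2:ℤ) : MvPolynomial V ℤ) = 2 := map_ofNat (C : ℤ →+* MvPolynomial V ℤ) 2
  refine ⟨g', mul_left_cancel₀ (two_ne_zero : (2 : MvPolynomial V ℤ) ≠ 0) ?_⟩
  rw [hg, hg', hC2]
  ring

lemma aux_pow_dvd {V : Type*} (p τ : V) (f : MvPolynomial V ℤ) (k : ℕ)
    (h : (4 * X p - X τ ^ 2) ∣ 2 ^ k * f) : (4 * X p - X τ ^ 2) ∣ f := by
  induction k generalizing f with
  | zero => simpa using h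
  | succ n ih =>
    apply ih
    apply aux_two_dvd p τ
    rw [show (2:MvPolynomial V ℤ) * (2 ^ n * f) = 2 ^ (n+1) * f by ring]
    exact h

/-- Congruence trick: multiplying by `[[1,0],[-τ,2]]` on both sides. -/
lemma aux_step1 {S : Type*} [CommRing S] {d : ℕ} (p τ : S)
    (W B : Matrix (Fin d) (Fin d) S) (hW : W = Wᵀ) (hB : B + Bᵀ = τ • W) :
    (2:S)^d * ((2:S)^d * (fromBlocks W B Bᵀ (p • W)).det) =
      (fromBlocks W (B - Bᵀ) (Bᵀ - B) ((4*p - τ^2) • W)).det := by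
  have key : (fromBlocks (1 : Matrix (Fin d) (Fin d) S) 0 ((-τ) • 1) ((2:S) • 1)) *
      (fromBlocks W B Bᵀ (p • W)) *
      (fromBlocks (1 : Matrix (Fin d) (Fin d) S) ((-τ) • 1) 0 ((2:S) • 1)) =
      fromBlocks W (B - Bᵀ) (Bᵀ - B) ((4*p - τ^2) • W) := by
    rw [fromBlocks_multiply, fromBlocks_multiply]
    simp only [Matrix.smul_mul, Matrix.mul_smul, Matrix.one_mul, Matrix.mul_one,
      Matrix.zero_mul, Matrix.mul_zero, Matrix.add_mul, Matrix.mul_add,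
      add_zero, zero_add, smul_smul, smul_add]
    ext (i | i) (j | j) <;>
      simp only [fromBlocks_apply₁₁, fromBlocks_apply₁₂, fromBlocks_apply₂₁,
        fromBlocks_apply₂₂, Matrix.add_apply, Matrix.smul_apply, Matrix.sub_apply,
        Matrix.transpose_apply, smul_eq_mul, Matrix.neg_apply, Matrix.zero_apply,
        mul_zero, add_zero] <;>
      · have hb := congrFun (congrFun hB i) j
        simp only [Matrix.add_apply, Matrix.smul_apply, Matrix.transpose_apply,
          smul_eq_mul] at hb
        first
          | linear_combination hb
          | linear_combination (-2 * τ) * hb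
          | ring
  have hdet := congrArg Matrix.det key
  rw [Matrix.det_mul, Matrix.det_mul, Matrix.det_fromBlocks_zero₁₂,
    Matrix.det_fromBlocks_zero₂₁, Matrix.det_smul] at hdet
  simp only [Matrix.det_one, Fintype.card_fin, mul_one, one_mul] at hdet
  linear_combination hdet

/-- If the upper right block has zero determinant, `c` divides the determinant of
a block matrix whose lower-right block is `c • W'`. -/
lemma aux_step2 {S : Type*} [CommRing S] {d : ℕ} (c : S)
    (W A B' W' : Matrix (Fin d) (Fin d) S) (hA : A.det = 0) :
    c ∣ (fromBlocks W A B' (c • W')).det := by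
  rw [← Ideal.mem_span_singleton]
  rw [← Ideal.Quotient.eq_zero_iff_mem]
  set mk := Ideal.Quotient.mk (Ideal.span {c})
  rw [RingHom.map_det]
  have hc : mk c = 0 := Ideal.Quotient.eq_zero_iff_mem.mpr (Ideal.mem_span_singleton_self c)
  have hz : ((c • W').map mk) = 0 := by
    ext i j
    simp [Matrix.map_apply, hc]
  have hmap : mk.mapMatrix (fromBlocks W A B' (c • W')) =
      fromBlocks (W.map mk) (A.map mk) (B'.map mk) 0 := by
    rw [RingHom.mapMatrix_apply, Matrix.fromBlocks_map, hz]
  rw [hmap]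
  -- multiply by the swap matrix J = fromBlocks 0 1 1 0
  set F := fromBlocks (W.map mk) (A.map mk) (B'.map mk) (0 : Matrix (Fin d) (Fin d) _)
  set J : Matrix (Fin d ⊕ Fin d) (Fin d ⊕ Fin d) (S ⧸ Ideal.span {c}) := fromBlocks 0 1 1 0
  have hFJ : F * J = fromBlocks (A.map mk) (W.map mk) 0 (B'.map mk) := by
    simp [F, J, fromBlocks_multiply]
  have hJJ : J * J = 1 := by
    simp [J, fromBlocks_multiply, Matrix.fromBlocks_one]
  have hAdet : (A.map mk).det = 0 := by
    rw [← RingHom.mapMatrix_apply, ← RingHom.map_det, hA, map_zero]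
  have h1 : F.det * (J.det * J.det) = 0 := by
    rw [← mul_assoc, ← Matrix.det_mul, hFJ, Matrix.det_fromBlocks_zero₂₁, hAdet,
      zero_mul, zero_mul]
  have h2 : J.det * J.det = 1 := by rw [← Matrix.det_mul, hJJ, Matrix.det_one]
  rw [h2, mul_one] at h1
  exact h1

/-- Variable type for the universal setting. -/
abbrev Vt (d : ℕ) := Fin 2 ⊕ (Fin d ⊕ ((Fin d × Fin d) ⊕ (Fin d × Fin d)))

/-- Universal symmetric matrix with diagonal `2·aᵢ`. -/
noncomputable def Wpoly (d : ℕ) : Matrix (Fin d) (Fin d) (MvPolynomial (Vt d) ℤ) :=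
  Matrix.of fun i j =>
    if i = j then 2 * X (Sum.inr (Sum.inl i))
    else if i < j then X (Sum.inr (Sum.inr (Sum.inl (i, j))))
    else X (Sum.inr (Sum.inr (Sum.inl (j, i))))

/-- Universal matrix `B` with `B + Bᵀ = τ•W` and diagonal `τ·aᵢ`. -/
noncomputable def Bpoly (d : ℕ) : Matrix (Fin d) (Fin d) (MvPolynomial (Vt d) ℤ) :=
  Matrix.of fun i j =>
    if i = j then X (Sum.inl 1) * X (Sum.inr (Sum.inl i))
    else if i < j then X (Sum.inr (Sum.inr (Sum.inr (i, j))))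
    else X (Sum.inl 1) * X (Sum.inr (Sum.inr (Sum.inl (j, i))))
      - X (Sum.inr (Sum.inr (Sum.inr (j, i))))

lemma Wpoly_symm (d : ℕ) : Wpoly d = (Wpoly d)ᵀ := by
  apply Matrix.ext
  intro i j
  rcases lt_trichotomy i j with h | h | h
  · simp only [Wpoly, Matrix.transpose_apply, Matrix.of_apply, if_neg h.ne, if_pos h,
      if_neg h.ne', if_neg (lt_asymm h)]
  · subst h
    simp only [Wpoly, Matrix.transpose_apply, Matrix.of_apply, eq_self_iff_true, if_true]
  · simp only [Wpoly, Matrix.transpose_apply, Matrix.of_apply, if_neg h.ne, if_pos h,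
      if_neg h.ne', if_neg (lt_asymm h)]

lemma Bpoly_rel (d : ℕ) :
    Bpoly d + (Bpoly d)ᵀ = (X (Sum.inl 1) : MvPolynomial (Vt d) ℤ) • Wpoly d := by
  apply Matrix.ext
  intro i j
  rcases lt_trichotomy i j with h | h | h
  · simp only [Bpoly, Wpoly, Matrix.add_apply, Matrix.transpose_apply, Matrix.smul_apply,
      smul_eq_mul, Matrix.of_apply, if_neg h.ne, if_pos h, if_neg h.ne', if_neg (lt_asymm h)]
    ring
  · subst h
    simp only [Bpoly, Wpoly, Matrix.add_apply, Matrix.transpose_apply, Matrix.smul_apply,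
      smul_eq_mul, Matrix.of_apply, eq_self_iff_true, if_true]
    ring
  · simp only [Bpoly, Wpoly, Matrix.add_apply, Matrix.transpose_apply, Matrix.smul_apply,
      smul_eq_mul, Matrix.of_apply, if_neg h.ne, if_pos h, if_neg h.ne', if_neg (lt_asymm h)]
    ring

/-- The universal divisibility statement. -/
lemma poly_dvd (d : ℕ) (hd : Odd d) :
    (4 * X (Sum.inl 0) - X (Sum.inl 1) ^ 2 : MvPolynomial (Vt d) ℤ) ∣
      (fromBlocks (Wpoly d) (Bpoly d) (Bpoly d)ᵀ
        ((X (Sum.inl 0) : MvPolynomial (Vt d) ℤ) • Wpoly d)).det := by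
  have h1 := aux_step1 (X (Sum.inl 0) : MvPolynomial (Vt d) ℤ) (X (Sum.inl 1))
    (Wpoly d) (Bpoly d) (Wpoly_symm d) (Bpoly_rel d)
  have hAdet : (Bpoly d - (Bpoly d)ᵀ).det = 0 := by
    apply aux_skew_det hd
    rw [Matrix.transpose_sub, Matrix.transpose_transpose]
    exact (neg_sub _ _).symm
  have h3 := aux_step2 (4 * X (Sum.inl 0) - X (Sum.inl 1) ^ 2 : MvPolynomial (Vt d) ℤ)
    (Wpoly d) (Bpoly d - (Bpoly d)ᵀ) ((Bpoly d)ᵀ - Bpoly d) (Wpoly d) hAdet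
  rw [← h1] at h3
  exact aux_pow_dvd (Sum.inl 0) (Sum.inl 1) _ d
    (aux_pow_dvd (Sum.inl 0) (Sum.inl 1) _ d h3)

/-- **divisibility of the discriminant.**  Let `O₀` be a discrete valuation ring
of characteristic `0` with uniformizer `π₀` dividing `2`, and let `t ∈ O₀` satisfy either
(`π₀ ∣ t` and `t ∣ 2`) or `t = 0`.  Let `R` be a commutative `O₀`-algebra, `d ≥ 1` an odd
integer, and `W, B` `d × d` matrices over `R` with `W = Wᵗ`, `B + Bᵗ = t·W`, and such that
there are `a₁, …, a_d ∈ R` with `W i i = 2·aᵢ` and `B i i = t·aᵢ`.  Then the determinant of the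
`2d × 2d` block matrix `[[W, B], [Bᵗ, π₀·W]]` lies in the ideal of `R` generated by
`4·π₀ − t²`. -/
theorem stmt_18 (O₀ : Type*) [CommRing O₀] [IsDomain O₀] [IsDiscreteValuationRing O₀]
    [CharZero O₀]
    (π₀ : O₀) (hπ₀ : Irreducible π₀) (hπ₀2 : π₀ ∣ 2)
    (t : O₀) (ht : (π₀ ∣ t ∧ t ∣ 2) ∨ t = 0)
    (R : Type*) [CommRing R] [Algebra O₀ R]
    (d : ℕ) (hd1 : 1 ≤ d) (hd : Odd d)
    (W B : Matrix (Fin d) (Fin d) R)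
    (hW : W = Wᵀ)
    (hB : B + Bᵀ = algebraMap O₀ R t • W)
    (a : Fin d → R)
    (hWa : ∀ i : Fin d, W i i = 2 * a i)
    (hBa : ∀ i : Fin d, B i i = algebraMap O₀ R t * a i) :
    (Matrix.fromBlocks W B Bᵀ (algebraMap O₀ R π₀ • W)).det ∈
      Ideal.span {algebraMap O₀ R (4 * π₀ - t ^ 2)} := by
  classical
  set p' : R := algebraMap O₀ R π₀ with hp'
  set t' : R := algebraMap O₀ R t with ht'
  let v : Vt d → R := Sum.elim ![p', t']
    (Sum.elim a (Sum.elim (fun ij => W ij.1 ij.2) (fun ij => B ij.1 ij.2)))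
  let Φ : MvPolynomial (Vt d) ℤ →+* R := MvPolynomial.eval₂Hom (Int.castRingHom R) v
  have hWsym : ∀ i j, W j i = W i j := fun i j => (congrFun (congrFun hW i) j).symm
  have hBrel : ∀ i j : Fin d, B i j + B j i = t' * W i j := by
    intro i j
    have := congrFun (congrFun hB i) j
    simpa using this
  have hΦW : (Wpoly d).map Φ = W := by
    apply Matrix.ext
    intro i j
    rcases lt_trichotomy i j with h | h | h
    · simp only [Wpoly, Matrix.map_apply, Matrix.of_apply, if_neg h.ne, if_pos h]
      simp [Φ, v]
    · subst h
      simp only [Wpoly, Matrix.map_apply, Matrix.of_apply, eq_self_iff_true, if_true,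
        _root_.map_mul, map_ofNat]
      simp [Φ, v, hWa]
    · simp only [Wpoly, Matrix.map_apply, Matrix.of_apply, if_neg h.ne', if_neg (lt_asymm h)]
      simp [Φ, v, hWsym i j]
  have hΦB : (Bpoly d).map Φ = B := by
    apply Matrix.ext
    intro i j
    rcases lt_trichotomy i j with h | h | h
    · simp only [Bpoly, Matrix.map_apply, Matrix.of_apply, if_neg h.ne, if_pos h]
      simp [Φ, v]
    · subst h
      simp only [Bpoly, Matrix.map_apply, Matrix.of_apply, eq_self_iff_true, if_true,
        _root_.map_mul]
      simp [Φ, v, hBa]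
    · simp only [Bpoly, Matrix.map_apply, Matrix.of_apply, if_neg h.ne', if_neg (lt_asymm h),
        _root_.map_sub, _root_.map_mul]
      have hB' := hBrel j i
      simp [Φ, v]
      linear_combination -hB'
  have hΦp : (((X (Sum.inl 0) : MvPolynomial (Vt d) ℤ)) • Wpoly d).map Φ = p' • W := by
    apply Matrix.ext
    intro i j
    have hw : Φ ((Wpoly d) i j) = W i j := by
      have := congrFun (congrFun hΦW i) j
      rwa [Matrix.map_apply] at this
    simp only [Matrix.map_apply, Matrix.smul_apply, smul_eq_mul, _root_.map_mul]
    rw [hw]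
    congr 1
    simp [Φ, v]
  obtain ⟨g, hg⟩ := poly_dvd d hd
  have hdet : (Matrix.fromBlocks W B Bᵀ (p' • W)).det =
      Φ ((fromBlocks (Wpoly d) (Bpoly d) (Bpoly d)ᵀ
        ((X (Sum.inl 0) : MvPolynomial (Vt d) ℤ) • Wpoly d)).det) := by
    rw [RingHom.map_det, RingHom.mapMatrix_apply, Matrix.fromBlocks_map,
      hΦW, hΦB, hΦp, Matrix.transpose_map, hΦB]
  have hc : Φ (4 * X (Sum.inl 0) - X (Sum.inl 1) ^ 2 : MvPolynomial (Vt d) ℤ) =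
      algebraMap O₀ R (4 * π₀ - t ^ 2) := by
    simp only [_root_.map_sub, _root_.map_mul, map_pow, map_ofNat]
    simp [Φ, v, hp', ht']
  rw [Ideal.mem_span_singleton]
  refine ⟨Φ g, ?_⟩
  rw [hdet, hg, _root_.map_mul, hc]
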